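/- Let B be a real symmetric n×n matrix. Then rank(B) + rank(I_n - B) = n if and only if B is idempotent (B² = B). -/

import Mathlib

theorem stmt_5 (n : ℕ) (B : Matrix (Fin n) (Fin n) ℝ) (hB : B.IsSymm) :
    B.rank + (1 - B).rank = n ↔ B * B = B := by
  set U := LinearMap.range B.mulVecLin
  set V := LinearMap.range (1 - B).mulVecLin
  have hsup : U ⊔ V = ⊤ := by
    rw [eq_top_iff]
    intro x _
    have : x = B.mulVecLin x + (1 - B).mulVecLin x := by
      rw [← LinearMap.add_apply, ← Matrix.mulVecLin_add]
      simp
    rw [this]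
    exact Submodule.add_mem_sup (LinearMap.mem_range_self _ x) (LinearMap.mem_range_self _ x)
  have hdim := Submodule.finrank_sup_add_finrank_inf_eq U V
  rw [hsup] at hdim
  have hU : B.rank = Module.finrank ℝ U := rfl
  have hV : (1 - B).rank = Module.finrank ℝ V := rfl
  have htop : Module.finrank ℝ (⊤ : Submodule ℝ (Fin n → ℝ)) = n := by
    simp [Module.finrank_pi]
  constructor
  · intro h
    have hinf : U ⊓ V = ⊥ := by
      have : Module.finrank ℝ ↥(U ⊓ V) = 0 := by omega
      exact Submodule.finrank_eq_zero.mp this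
    have key : ∀ x, (B - B * B).mulVec x = 0 := by
      intro x
      have h1 : (B - B * B).mulVec x ∈ U := by
        have : (B - B * B).mulVec x = B.mulVecLin ((1 - B).mulVec x) := by
          simp [Matrix.mulVecLin_apply, Matrix.mulVec_mulVec, Matrix.mul_sub, Matrix.mul_one]
        rw [this]; exact LinearMap.mem_range_self _ _
      have h2 : (B - B * B).mulVec x ∈ V := by
        have : (B - B * B).mulVec x = (1 - B).mulVecLin (B.mulVec x) := by
          simp [Matrix.mulVecLin_apply, Matrix.mulVec_mulVec, Matrix.sub_mul, Matrix.one_mul, Matrix.sub_mulVec]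
        rw [this]; exact LinearMap.mem_range_self _ _
      have : (B - B * B).mulVec x ∈ U ⊓ V := ⟨h1, h2⟩
      rw [hinf] at this
      simpa using this
    have : B - B * B = 0 := by
      ext i j
      have := congrFun (key (Pi.single j 1)) i
      simpa [Matrix.mulVec_single] using this
    have := sub_eq_zero.mp this
    exact this.symm
  · intro h
    have hinf : U ⊓ V = ⊥ := by
      rw [eq_bot_iff]
      rintro y ⟨⟨x, hx⟩, ⟨z, hz⟩⟩
      have h1 : B.mulVec y = y := by
        rw [← hx]
        simp only [Matrix.mulVecLin_apply, Matrix.mulVec_mulVec, h]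
      have h2 : B.mulVec y = 0 := by
        rw [← hz]
        simp only [Matrix.mulVecLin_apply, Matrix.mulVec_mulVec, Matrix.mul_sub,
          Matrix.mul_one, h, sub_self, Matrix.zero_mulVec]
      rw [Submodule.mem_bot, ← h1, h2]
    rw [hU, hV, ← hdim, hinf, htop]
    simp
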